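/- arXiv:2504.15547 — 4 statements merged into one kernel-verified Lean document; each statement's English description precedes it below -/
import Mathlib

section
/- For all real numbers p in [0,1] and all positive integers h, the quantity g(h,p) := p·exp(-0.1·h·p^(1/h)) satisfies g(h,p) ≤ exp(-0.1·h). -/
theorem stmt_0 (p : ℝ) (hp0 : 0 ≤ p) (hp1 : p ≤ 1) (h : ℕ) (hh : 0 < h) :
    p * Real.exp (-0.1 * h * p ^ ((1 : ℝ) / h)) ≤ Real.exp (-0.1 * h) := by
  rcases eq_or_lt_of_le hp0 with h0 | h0
  · rw [← h0]
    simp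
    positivity
  · set q := p ^ ((1:ℝ)/h) with hq
    have hh' : (0:ℝ) < h := by exact_mod_cast hh
    have hq0 : 0 < q := Real.rpow_pos_of_pos h0 _
    have hq1 : q ≤ 1 := Real.rpow_le_one hp0 hp1 (by positivity)
    have hlogp : (h:ℝ) * Real.log q = Real.log p := by
      rw [hq, Real.log_rpow h0]
      field_simp
    have hle : Real.log q ≤ 0.1 * (q - 1) := by
      have h1 : Real.log q ≤ q - 1 := Real.log_le_sub_one_of_pos hq0
      nlinarith
    have key : Real.log p + (-0.1 * h * q) ≤ -0.1 * h := by
      have := mul_le_mul_of_nonneg_left hle hh'.le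
      rw [hlogp] at this
      nlinarith
    calc p * Real.exp (-0.1 * h * q)
        = Real.exp (Real.log p + (-0.1 * h * q)) := by
          rw [Real.exp_add, Real.exp_log h0]
      _ ≤ Real.exp (-0.1 * h) := Real.exp_le_exp.mpr key
end

section
/- For every integer h ≥ 1 and every real p ∈ (0,1], the function g satisfies g(h-1,p) ≤ 1.2·g(h,p), where g(h,p) = p·exp(-0.1·h·p^(1/h)) for h ≥ 1 and g(0,p) = p. -/
noncomputable def g (h : ℕ) (p : ℝ) : ℝ :=
  if h = 0 then p else p * Real.exp (-0.1 * h * p ^ ((1 : ℝ) / h))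

lemma exp_point_one : Real.exp 0.1 ≤ 1.2 := by
  have h := Real.exp_one_rpow (0.1 : ℝ)
  have h2 : Real.exp 1 ≤ 2.7182818286 := Real.exp_one_lt_d9.le
  calc Real.exp 0.1 = Real.exp 1 ^ (0.1 : ℝ) := (Real.exp_one_rpow _).symm
    _ ≤ 2.7182818286 ^ (0.1 : ℝ) := by
        apply Real.rpow_le_rpow (Real.exp_pos 1).le h2 (by norm_num)
    _ ≤ 1.2 := by
        rw [show (0.1 : ℝ) = (10 : ℝ)⁻¹ by norm_num,
          Real.rpow_inv_le_iff_of_pos (by norm_num) (by norm_num) (by norm_num)]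
        norm_num

theorem stmt_5 (h : ℕ) (hh : 1 ≤ h) (p : ℝ) (hp0 : 0 < p) (hp1 : p ≤ 1) :
    g (h - 1) p ≤ 1.2 * g h p := by
  rcases eq_or_lt_of_le hh with h1 | h2
  · -- h = 1
    subst h1
    have g0 : g 0 p = p := by simp [g]
    have g1 : g 1 p = p * Real.exp (-0.1 * 1 * p) := by
      simp [g]
    rw [show (1:ℕ) - 1 = 0 from rfl, g0, g1]
    have key : 1 ≤ 1.2 * Real.exp (-0.1 * 1 * p) := by
      have e1 : Real.exp (0.1 * p) ≤ Real.exp 0.1 := by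
        apply Real.exp_le_exp.2; nlinarith
      have e2 : Real.exp (0.1 * p) ≤ 1.2 := e1.trans exp_point_one
      have e3 : (0:ℝ) < Real.exp (-0.1 * 1 * p) := Real.exp_pos _
      have e4 : Real.exp (0.1 * p) * Real.exp (-0.1 * 1 * p) = 1 := by
        rw [← Real.exp_add]; ring_nf; exact Real.exp_zero
      nlinarith
    nlinarith
  · -- h ≥ 2
    have hhn : h ≠ 0 := by omega
    have hmn : h - 1 ≠ 0 := by omega
    simp only [g, if_neg hhn, if_neg hmn]
    -- key: h * p^(1/h) ≤ (h-1) * p^(1/(h-1)) + 1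
    set m : ℕ := h - 1 with hm
    have hmR : (0:ℝ) < (m:ℝ) := by
      have : 1 ≤ m := by omega
      exact_mod_cast Nat.pos_of_ne_zero hmn
    have hhR : (0:ℝ) < (h:ℝ) := by exact_mod_cast Nat.pos_of_ne_zero hhn
    have hhm : (h:ℝ) = (m:ℝ) + 1 := by
      have : h = m + 1 := by omega
      exact_mod_cast this
    -- AM-GM : p^(1/h) ≤ (m/h) * p^(1/m) + 1/h
    have amgm : p ^ ((1:ℝ)/h) ≤ ((m:ℝ)/h) * p ^ ((1:ℝ)/m) + 1/h := by
      have key := Real.geom_mean_le_arith_mean2_weighted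
        (w₁ := (m:ℝ)/h) (w₂ := 1/h) (p₁ := p ^ ((1:ℝ)/m)) (p₂ := 1)
        (by positivity) (by positivity) (by positivity) zero_le_one
        (by field_simp [hhm]; linarith)
      have e1 : (p ^ ((1:ℝ)/m)) ^ ((m:ℝ)/h) = p ^ ((1:ℝ)/h) := by
        rw [← Real.rpow_mul hp0.le]
        congr 1
        field_simp
      rw [e1, Real.one_rpow, mul_one, mul_one] at key
      exact key
    have expineq : Real.exp (-0.1 * (m:ℝ) * p ^ ((1:ℝ)/m)) ≤
        1.2 * Real.exp (-0.1 * (h:ℝ) * p ^ ((1:ℝ)/h)) := by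
      have step : -0.1 * (m:ℝ) * p ^ ((1:ℝ)/m) ≤ 0.1 + -0.1 * (h:ℝ) * p ^ ((1:ℝ)/h) := by
        have := mul_le_mul_of_nonneg_left amgm hhR.le
        rw [mul_add] at this
        have h1 : (h:ℝ) * ((m:ℝ)/h * p ^ ((1:ℝ)/m)) = (m:ℝ) * p ^ ((1:ℝ)/m) := by
          field_simp
        have h2 : (h:ℝ) * (1/(h:ℝ)) = 1 := by field_simp
        nlinarith
      calc Real.exp (-0.1 * (m:ℝ) * p ^ ((1:ℝ)/m))
          ≤ Real.exp (0.1 + -0.1 * (h:ℝ) * p ^ ((1:ℝ)/h)) := Real.exp_le_exp.2 step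
        _ = Real.exp 0.1 * Real.exp (-0.1 * (h:ℝ) * p ^ ((1:ℝ)/h)) := Real.exp_add _ _
        _ ≤ 1.2 * Real.exp (-0.1 * (h:ℝ) * p ^ ((1:ℝ)/h)) := by
            exact mul_le_mul_of_nonneg_right exp_point_one (Real.exp_pos _).le
    calc p * Real.exp (-0.1 * (m:ℝ) * p ^ ((1:ℝ)/m))
        ≤ p * (1.2 * Real.exp (-0.1 * (h:ℝ) * p ^ ((1:ℝ)/h))) :=
          mul_le_mul_of_nonneg_left expineq hp0.le
      _ = 1.2 * (p * Real.exp (-0.1 * (h:ℝ) * p ^ ((1:ℝ)/h))) := by ring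
end

section
/- For every integer h ≥ 2 and all reals p ∈ (0,1], r ∈ (0,p], one has (h-1)·p^(1/(h-1)) + e²·(r/p) ≥ (h+2)·r^(1/h). -/
theorem stmt_9 (h : ℕ) (hh : 2 ≤ h) (p r : ℝ) (hp0 : 0 < p) (hp1 : p ≤ 1)
    (hr0 : 0 < r) (hrp : r ≤ p) :
    ((h : ℝ) + 2) * r ^ ((1 : ℝ) / h) ≤
      ((h : ℝ) - 1) * p ^ (1 / ((h : ℝ) - 1)) + Real.exp 2 * (r / p) := by
  set H : ℝ := (h : ℝ) with hH
  have hH2 : (2 : ℝ) ≤ H := by rw [hH]; exact_mod_cast hh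
  have hH0 : 0 < H := by linarith
  have hH1 : 0 < H - 1 := by linarith
  have key := Real.geom_mean_le_arith_mean2_weighted
    (w₁ := (H - 1) / H) (w₂ := 1 / H)
    (p₁ := p ^ (1 / (H - 1))) (p₂ := Real.exp 2 * (r / p))
    (by positivity) (by positivity) (by positivity) (by positivity)
    (by field_simp; ring)
  have e1 : (p ^ (1 / (H - 1))) ^ ((H - 1) / H) = p ^ ((1 : ℝ) / H) := by
    rw [← Real.rpow_mul hp0.le]
    congr 1
    field_simp
  have e2 : p ^ ((1 : ℝ) / H) * (Real.exp 2 * (r / p)) ^ ((1 : ℝ) / H)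
      = Real.exp (2 / H) * r ^ ((1 : ℝ) / H) := by
    rw [← Real.mul_rpow hp0.le (by positivity)]
    have : p * (Real.exp 2 * (r / p)) = Real.exp 2 * r := by
      field_simp
    rw [this, Real.mul_rpow (Real.exp_pos 2).le hr0.le, ← Real.exp_mul]
    rw [mul_one_div]
  rw [e1, e2] at key
  have key2 : H + 2 ≤ H * Real.exp (2 / H) := by
    have := Real.add_one_le_exp (2 / H)
    calc H + 2 = H * (2 / H + 1) := by field_simp; ring
    _ ≤ H * Real.exp (2 / H) := by
        apply mul_le_mul_of_nonneg_left this hH0.le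
  have hrpow : 0 < r ^ ((1 : ℝ) / H) := Real.rpow_pos_of_pos hr0 _
  calc (H + 2) * r ^ ((1 : ℝ) / H)
      ≤ H * Real.exp (2 / H) * r ^ ((1 : ℝ) / H) :=
        mul_le_mul_of_nonneg_right key2 hrpow.le
    _ = H * (Real.exp (2 / H) * r ^ ((1 : ℝ) / H)) := by ring
    _ ≤ H * ((H - 1) / H * p ^ (1 / (H - 1)) + 1 / H * (Real.exp 2 * (r / p))) :=
        mul_le_mul_of_nonneg_left key hH0.le
    _ = (H - 1) * p ^ (1 / (H - 1)) + Real.exp 2 * (r / p) := by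
        field_simp
end

section
/- For all reals p, q, λ ∈ [0,1] and every positive integer h, the inequality g(h, λp + (1-λ)q) ≥ (1-λ)·[λ·g(h-1, p) + (1-λ)·g(h, q)] holds, where g(h,p) = p·exp(-0.1·h·p^(1/h)) for h ≥ 1 and g(0,p) = p. -/
namespace Stmt10Aux

set_option maxHeartbeats 1000000

open Real

/-- The exponential factor of `g`. -/
noncomputable def ee (n : ℕ) (t : ℝ) : ℝ := Real.exp (-0.1 * n * t ^ ((1 : ℝ) / n))

lemma g_eq (n : ℕ) (t : ℝ) : g n t = t * ee n t := by
  unfold g ee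
  rcases Nat.eq_zero_or_pos n with h | h
  · subst h; simp
  · rw [if_neg h.ne']

lemma ee_pos (n : ℕ) (t : ℝ) : 0 < ee n t := Real.exp_pos _

lemma rpow_mem {t : ℝ} (n : ℕ) (h0 : 0 ≤ t) (h1 : t ≤ 1) :
    0 ≤ t ^ ((1 : ℝ) / n) ∧ t ^ ((1 : ℝ) / n) ≤ 1 := by
  constructor
  · exact Real.rpow_nonneg h0 _
  · exact Real.rpow_le_one h0 h1 (by positivity)

lemma ee_antitone (n : ℕ) {s t : ℝ} (h0 : 0 ≤ s) (hst : s ≤ t) : ee n t ≤ ee n s := by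
  unfold ee
  apply Real.exp_le_exp.2
  have : s ^ ((1 : ℝ) / n) ≤ t ^ ((1 : ℝ) / n) :=
    Real.rpow_le_rpow h0 hst (by positivity)
  nlinarith [Nat.cast_nonneg (α := ℝ) n]

lemma ee_le_one (n : ℕ) {t : ℝ} (h0 : 0 ≤ t) : ee n t ≤ 1 := by
  unfold ee
  apply Real.exp_le_one_iff.2
  have h1 : 0 ≤ t ^ ((1 : ℝ) / n) := Real.rpow_nonneg h0 _
  nlinarith [Nat.cast_nonneg (α := ℝ) n]

/-- Monotonicity core: `u * exp(-u/10)` is monotone on `[0,1]`. -/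
lemma wcore {τ σ : ℝ} (h0 : 0 ≤ τ) (hts : τ ≤ σ) (hs1 : σ ≤ 1) :
    τ * Real.exp (-0.1 * τ) ≤ σ * Real.exp (-0.1 * σ) := by
  have key : τ ≤ σ * Real.exp (-0.1 * (σ - τ)) := by
    have h1 : 1 - 0.1 * (σ - τ) ≤ Real.exp (-0.1 * (σ - τ)) := by
      have := Real.add_one_le_exp (-0.1 * (σ - τ)); linarith
    nlinarith
  calc τ * Real.exp (-0.1 * τ) ≤ (σ * Real.exp (-0.1 * (σ - τ))) * Real.exp (-0.1 * τ) := by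
        apply mul_le_mul_of_nonneg_right key (Real.exp_pos _).le
    _ = σ * Real.exp (-0.1 * σ) := by
        rw [mul_assoc, ← Real.exp_add]; ring_nf

/-- `g n` is monotone on `[0,1]`. -/
lemma g_mono (n : ℕ) {s t : ℝ} (h0 : 0 ≤ s) (hst : s ≤ t) (ht1 : t ≤ 1) :
    g n s ≤ g n t := by
  rcases Nat.eq_zero_or_pos n with h | hn
  · subst h; unfold g; simpa using hst
  have ht0 : (0:ℝ) ≤ t := le_trans h0 hst
  set τ := s ^ ((1 : ℝ) / n) with hτ
  set σ := t ^ ((1 : ℝ) / n) with hσ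
  have hτ0 : 0 ≤ τ := Real.rpow_nonneg h0 _
  have hτσ : τ ≤ σ := Real.rpow_le_rpow h0 hst (by positivity)
  have hσ1 : σ ≤ 1 := (rpow_mem n ht0 ht1).2
  have hs : s = τ ^ n := by
    rw [hτ, one_div, Real.rpow_inv_natCast_pow h0 hn.ne']
  have ht : t = σ ^ n := by
    rw [hσ, one_div, Real.rpow_inv_natCast_pow ht0 hn.ne']
  have key : ∀ u : ℝ, 0 ≤ u → (u ^ n) * ee n ((u:ℝ) ^ n) = (u * Real.exp (-0.1 * u)) ^ n := by
    intro u hu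
    have h1 : ((u:ℝ) ^ n) ^ ((1 : ℝ) / n) = u := by
      rw [one_div, Real.pow_rpow_inv_natCast hu hn.ne']
    unfold ee
    rw [h1, mul_pow, ← Real.exp_nat_mul]
    ring_nf
  rw [g_eq, g_eq, hs, ht, key τ hτ0, key σ (le_trans hτ0 hτσ)]
  exact pow_le_pow_left₀ (by positivity) (wcore hτ0 hτσ hσ1) n

/-- Tangent-type AM-GM bound: `(m+1) t^(1/(m+1)) ≤ t/s + m s^(1/m)` for `0 < s ≤ 1`, `0 ≤ t`. -/
lemma tan_bound (m : ℕ) {s t : ℝ} (hs : 0 < s) (hs1 : s ≤ 1) (ht : 0 ≤ t) :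
    ((m : ℝ) + 1) * t ^ ((1 : ℝ) / (m + 1)) ≤ t / s + m * s ^ ((1 : ℝ) / m) := by
  rcases Nat.eq_zero_or_pos m with h | hm
  · subst h
    simp only [Nat.cast_zero, zero_add, one_mul, zero_mul, add_zero]
    norm_num
    rw [le_div_iff₀ hs]
    nlinarith
  · have hM : (0:ℝ) < m := by exact_mod_cast hm
    have hw : (1 : ℝ) / (m + 1) + m / (m + 1) = 1 := by
      field_simp
      ring
    have hgm := Real.geom_mean_le_arith_mean2_weighted
      (by positivity : (0:ℝ) ≤ 1 / (m + 1)) (by positivity : (0:ℝ) ≤ (m:ℝ) / (m + 1))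
      (by positivity : (0:ℝ) ≤ t / s) (by positivity : (0:ℝ) ≤ s ^ ((1:ℝ)/m)) hw
    have hgmeq : (t / s) ^ ((1:ℝ) / (m + 1)) * (s ^ ((1:ℝ)/m)) ^ ((m:ℝ) / (m + 1))
        = t ^ ((1 : ℝ) / (m + 1)) := by
      rw [← Real.rpow_mul hs.le]
      have : (1:ℝ)/m * ((m:ℝ) / (m + 1)) = 1 / (m+1) := by
        field_simp
      rw [this, ← Real.mul_rpow (by positivity) hs.le, div_mul_cancel₀ _ hs.ne']
    rw [hgmeq] at hgm
    have := mul_le_mul_of_nonneg_left hgm (by positivity : (0:ℝ) ≤ (m:ℝ)+1)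
    calc ((m : ℝ) + 1) * t ^ ((1 : ℝ) / (m + 1))
        ≤ ((m:ℝ)+1) * (1 / (m + 1) * (t / s) + (m:ℝ) / (m + 1) * s ^ ((1:ℝ)/m)) := this
      _ = t / s + m * s ^ ((1 : ℝ) / m) := by field_simp

/-- Derivative of `t * ee n t` at `t > 0`. -/
lemma g_hasDeriv (n : ℕ) (hn : 1 ≤ n) {t : ℝ} (ht : 0 < t) :
    HasDerivAt (fun t => t * ee n t) ((1 - 0.1 * t ^ ((1 : ℝ) / n)) * ee n t) t := by
  have hn0 : ((n : ℝ)) ≠ 0 := by positivity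
  have hin : HasDerivAt (fun t : ℝ => t ^ ((1 : ℝ) / n))
      ((1 / n) * t ^ ((1 : ℝ) / n - 1)) t :=
    Real.hasDerivAt_rpow_const (Or.inl ht.ne')
  have hlin : HasDerivAt (fun t : ℝ => -0.1 * n * t ^ ((1 : ℝ) / n))
      (-0.1 * n * ((1 / n) * t ^ ((1 : ℝ) / n - 1))) t := hin.const_mul _
  have hexp : HasDerivAt (fun t : ℝ => Real.exp (-0.1 * n * t ^ ((1 : ℝ) / n)))
      (Real.exp (-0.1 * n * t ^ ((1 : ℝ) / n)) * (-0.1 * n * ((1 / n) * t ^ ((1 : ℝ) / n - 1)))) t :=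
    hlin.exp
  have hmul := (hasDerivAt_id t).mul hexp
  have htp : t * t ^ ((1 : ℝ) / n - 1) = t ^ ((1 : ℝ) / n) := by
    rw [Real.rpow_sub ht, Real.rpow_one]
    field_simp
  have key : t * (-0.1 * n * ((1 / n) * t ^ ((1 : ℝ) / n - 1))) = -0.1 * t ^ ((1 : ℝ) / n) := by
    have h2 : (n : ℝ) * (1 / n) = 1 := by field_simp
    calc t * (-0.1 * n * ((1 / n) * t ^ ((1 : ℝ) / n - 1)))
        = -0.1 * ((n : ℝ) * (1 / n)) * (t * t ^ ((1 : ℝ) / n - 1)) := by ring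
      _ = -0.1 * t ^ ((1 : ℝ) / n) := by rw [h2, htp]; ring
  have heq : (1 : ℝ) * Real.exp (-0.1 * n * t ^ ((1 : ℝ) / n)) +
      t * (Real.exp (-0.1 * n * t ^ ((1 : ℝ) / n)) * (-0.1 * n * ((1 / n) * t ^ ((1 : ℝ) / n - 1))))
      = (1 - 0.1 * t ^ ((1 : ℝ) / n)) * ee n t := by
    unfold ee
    calc (1 : ℝ) * Real.exp (-0.1 * n * t ^ ((1 : ℝ) / n)) +
        t * (Real.exp (-0.1 * n * t ^ ((1 : ℝ) / n)) * (-0.1 * n * ((1 / n) * t ^ ((1 : ℝ) / n - 1))))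
        = (1 + t * (-0.1 * n * ((1 / n) * t ^ ((1 : ℝ) / n - 1)))) *
            Real.exp (-0.1 * n * t ^ ((1 : ℝ) / n)) := by ring
      _ = (1 - 0.1 * t ^ ((1 : ℝ) / n)) * Real.exp (-0.1 * n * t ^ ((1 : ℝ) / n)) := by
          rw [key]; ring
  simp only [id_eq] at hmul
  rw [heq] at hmul
  exact hmul

/-- Continuity of `t * ee n t` on `[0,1]`. -/
lemma g_contOn (n : ℕ) : ContinuousOn (fun t : ℝ => t * ee n t) (Set.Icc 0 1) := by
  apply ContinuousOn.mul continuousOn_id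
  apply Continuous.comp_continuousOn Real.continuous_exp
  apply ContinuousOn.mul continuousOn_const
  intro x _
  exact (Real.continuousAt_rpow_const x _ (Or.inr (by positivity))).continuousWithinAt

/-- The derivative is antitone on `(0,1]`. -/
lemma gderiv_anti (n : ℕ) {t₁ t₂ : ℝ} (h1 : 0 < t₁) (h12 : t₁ ≤ t₂) (h2 : t₂ ≤ 1) :
    (1 - 0.1 * t₂ ^ ((1 : ℝ) / n)) * ee n t₂ ≤ (1 - 0.1 * t₁ ^ ((1 : ℝ) / n)) * ee n t₁ := by
  have hr1 := rpow_mem n h1.le (le_trans h12 h2)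
  have hr2 := rpow_mem n (le_trans h1.le h12) h2
  have hr12 : t₁ ^ ((1 : ℝ) / n) ≤ t₂ ^ ((1 : ℝ) / n) :=
    Real.rpow_le_rpow h1.le h12 (by positivity)
  apply mul_le_mul (by linarith) (ee_antitone n h1.le h12) (ee_pos n t₂).le (by linarith)

/-- Tangent line bound at `x`: for `0 ≤ y ≤ x ≤ 1`,
`g y + (x - y) * g'(x) ≤ g x`. -/
lemma tangent_line (n : ℕ) (hn : 1 ≤ n) {y x : ℝ} (hy : 0 ≤ y) (hyx : y ≤ x) (hx1 : x ≤ 1) :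
    y * ee n y + (x - y) * ((1 - 0.1 * x ^ ((1 : ℝ) / n)) * ee n x) ≤ x * ee n x := by
  rcases eq_or_lt_of_le hyx with rfl | hlt
  · simp
  have hsub : Set.Icc y x ⊆ Set.Icc (0:ℝ) 1 :=
    Set.Icc_subset_Icc hy hx1
  obtain ⟨c, hc, hceq⟩ := exists_hasDerivAt_eq_slope (fun t => t * ee n t)
      (fun t => (1 - 0.1 * t ^ ((1 : ℝ) / n)) * ee n t) hlt
      ((g_contOn n).mono hsub)
      (fun z hz => g_hasDeriv n hn (lt_of_le_of_lt hy hz.1))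
  have hanti : (1 - 0.1 * x ^ ((1 : ℝ) / n)) * ee n x
      ≤ (1 - 0.1 * c ^ ((1 : ℝ) / n)) * ee n c :=
    gderiv_anti n (lt_of_le_of_lt hy hc.1) hc.2.le hx1
  have hxy : 0 < x - y := by linarith
  rw [eq_div_iff hxy.ne'] at hceq
  nlinarith [mul_le_mul_of_nonneg_right hanti hxy.le]

/-- Chord (concavity) bound: for `0 ≤ y ≤ z ≤ 1` and `l ∈ [0,1]`. -/
lemma chord (n : ℕ) (hn : 1 ≤ n) {y z l : ℝ} (hy : 0 ≤ y) (hyz : y ≤ z) (hz : z ≤ 1)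
    (hl : 0 ≤ l) (hl1 : l ≤ 1) :
    l * (z * ee n z) + (1 - l) * (y * ee n y)
      ≤ (l * z + (1 - l) * y) * ee n (l * z + (1 - l) * y) := by
  rcases eq_or_lt_of_le hyz with rfl | hyz'
  · have h1 : l * y + (1 - l) * y = y := by ring
    rw [h1]
    exact le_of_eq (by ring)
  rcases eq_or_lt_of_le hl with rfl | hl0
  · have h1 : (0:ℝ) * z + (1 - 0) * y = y := by ring
    rw [h1]
    exact le_of_eq (by ring)
  rcases eq_or_lt_of_le hl1 with rfl | hl1'
  · have h1 : (1:ℝ) * z + (1 - 1) * y = z := by ring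
    rw [h1]
    exact le_of_eq (by ring)
  set x := l * z + (1 - l) * y with hxdef
  have hyx : y < x := by nlinarith
  have hxz : x < z := by nlinarith
  have hx1 : x ≤ 1 := by nlinarith
  rcases eq_or_lt_of_le hy with rfl | hy0
  -- y = 0 : scaling argument
  · have hx : x = l * z := by rw [hxdef]; ring
    have hmono : ee n z ≤ ee n (l * z) := ee_antitone n (by nlinarith) (by nlinarith)
    rw [hx]
    simp only [mul_zero, zero_mul, add_zero]
    nlinarith [mul_le_mul_of_nonneg_left hmono (by positivity : (0:ℝ) ≤ l * z)]
  -- main case : two mean value theorems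
  obtain ⟨c₁, hc₁, hceq₁⟩ := exists_hasDerivAt_eq_slope (fun t => t * ee n t)
      (fun t => (1 - 0.1 * t ^ ((1 : ℝ) / n)) * ee n t) hyx
      ((g_contOn n).mono (Set.Icc_subset_Icc hy0.le (le_trans hxz.le hz)))
      (fun w hw => g_hasDeriv n hn (lt_trans hy0 hw.1))
  obtain ⟨c₂, hc₂, hceq₂⟩ := exists_hasDerivAt_eq_slope (fun t => t * ee n t)
      (fun t => (1 - 0.1 * t ^ ((1 : ℝ) / n)) * ee n t) hxz
      ((g_contOn n).mono (Set.Icc_subset_Icc (by nlinarith) hz))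
      (fun w hw => g_hasDeriv n hn (lt_trans (by nlinarith : (0:ℝ) < x) hw.1))
  have hanti : (1 - 0.1 * c₂ ^ ((1 : ℝ) / n)) * ee n c₂
      ≤ (1 - 0.1 * c₁ ^ ((1 : ℝ) / n)) * ee n c₁ :=
    gderiv_anti n (lt_trans hy0 hc₁.1) (le_trans hc₁.2.le hc₂.1.le) (le_trans hc₂.2.le hz)
  have h1 : 0 < x - y := by linarith
  have h2 : 0 < z - x := by linarith
  rw [eq_div_iff h1.ne'] at hceq₁
  rw [eq_div_iff h2.ne'] at hceq₂
  have hceq₁' : (1 - 0.1 * c₁ ^ ((1:ℝ)/n)) * ee n c₁ * (x - y) = x * ee n x - y * ee n y := by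
    simpa using hceq₁
  have hceq₂' : (1 - 0.1 * c₂ ^ ((1:ℝ)/n)) * ee n c₂ * (z - x) = z * ee n z - x * ee n x := by
    simpa using hceq₂
  have hA : (1 - l) * (x - y) = l * (z - x) := by rw [hxdef]; ring
  have hD : (l * (z - x)) * ((1 - 0.1 * c₂ ^ ((1:ℝ)/n)) * ee n c₂)
      ≤ (l * (z - x)) * ((1 - 0.1 * c₁ ^ ((1:ℝ)/n)) * ee n c₁) :=
    mul_le_mul_of_nonneg_left hanti (mul_nonneg hl0.le h2.le)
  have step : l * (z * ee n z - x * ee n x) ≤ (1 - l) * (x * ee n x - y * ee n y) := by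
    calc l * (z * ee n z - x * ee n x)
        = (l * (z - x)) * ((1 - 0.1 * c₂ ^ ((1:ℝ)/n)) * ee n c₂) := by rw [← hceq₂']; ring
      _ ≤ (l * (z - x)) * ((1 - 0.1 * c₁ ^ ((1:ℝ)/n)) * ee n c₁) := hD
      _ = ((1 - l) * (x - y)) * ((1 - 0.1 * c₁ ^ ((1:ℝ)/n)) * ee n c₁) := by rw [hA]
      _ = (1 - l) * (x * ee n x - y * ee n y) := by rw [← hceq₁']; ring
  linarith [step]

/-- generic upper bound. -/
lemma exp_le_inv_one_sub {t : ℝ} (h0 : 0 ≤ t) (h1 : t < 1) : Real.exp t ≤ (1 - t)⁻¹ := by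
  have h2 : 1 - t ≤ Real.exp (-t) := by
    have := Real.add_one_le_exp (-t); linarith
  have h3 : Real.exp t = (Real.exp (-t))⁻¹ := by
    rw [Real.exp_neg, inv_inv]
  rw [h3]
  exact inv_anti₀ (by linarith) h2

/-- `exp(0.1) ≤ 1.106`. -/
lemma exp_point_one_le : Real.exp 0.1 ≤ 1.106 := by
  have h1 : Real.exp 0.01 ≤ (1 - 0.01 : ℝ)⁻¹ := exp_le_inv_one_sub (by norm_num) (by norm_num)
  have h2 : Real.exp 0.1 = (Real.exp 0.01) ^ (10 : ℕ) := by
    rw [← Real.exp_nat_mul]; norm_num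
  rw [h2]
  calc (Real.exp 0.01) ^ (10:ℕ) ≤ ((1 - 0.01 : ℝ)⁻¹) ^ (10:ℕ) := by
        apply pow_le_pow_left₀ (Real.exp_pos _).le h1
    _ ≤ 1.106 := by norm_num

/-- `10/9 ≤ exp(0.10545)`. -/
lemma exp_kappa_ge : (10 : ℝ) / 9 ≤ Real.exp 0.10545 := by
  have h1 : (1.0010545 : ℝ) ≤ Real.exp 0.0010545 := by
    have := Real.add_one_le_exp (0.0010545 : ℝ); linarith
  have h2 : Real.exp 0.10545 = (Real.exp 0.0010545) ^ (100 : ℕ) := by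
    rw [← Real.exp_nat_mul]; norm_num
  rw [h2]
  calc (10:ℝ)/9 ≤ (1.0010545 : ℝ) ^ (100:ℕ) := by norm_num
    _ ≤ (Real.exp 0.0010545) ^ (100:ℕ) := by
        apply pow_le_pow_left₀ (by norm_num) h1

/-- `exp(0.9268 * 0.106) ≤ 1.106`. -/
lemma exp_thw_le : Real.exp (0.9268 * 0.106) ≤ 1.106 := by
  have h1 : Real.exp (0.9268 * 0.106 / 10) ≤ (1 - 0.9268 * 0.106 / 10)⁻¹ :=
    exp_le_inv_one_sub (by norm_num) (by norm_num)
  have h2 : Real.exp (0.9268 * 0.106) = (Real.exp (0.9268 * 0.106 / 10)) ^ (10 : ℕ) := by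
    rw [← Real.exp_nat_mul]; norm_num
  rw [h2]
  calc (Real.exp (0.9268 * 0.106 / 10)) ^ (10:ℕ) ≤ ((1 - 0.9268 * 0.106 / 10)⁻¹) ^ (10:ℕ) := by
        apply pow_le_pow_left₀ (Real.exp_pos _).le h1
    _ ≤ 1.106 := by norm_num

/-- `exp(2.0545) ≤ 0.8268 / 0.10545`. -/
lemma exp_L_le : Real.exp 2.0545 ≤ 0.8268 / 0.10545 := by
  have he1 : Real.exp 1 < 2.7182818286 := Real.exp_one_lt_d9
  have he2 : Real.exp 2 ≤ 2.7182818286 ^ (2:ℕ) := by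
    have h2 : Real.exp 2 = (Real.exp 1) ^ (2 : ℕ) := by
      rw [← Real.exp_nat_mul]; norm_num
    rw [h2]
    apply pow_le_pow_left₀ (Real.exp_pos _).le he1.le
  have he3 : Real.exp 0.0545 ≤ (1 - 0.0545 : ℝ)⁻¹ :=
    exp_le_inv_one_sub (by norm_num) (by norm_num)
  have he4 : Real.exp 2.0545 = Real.exp 2 * Real.exp 0.0545 := by
    rw [← Real.exp_add]; norm_num
  rw [he4]
  calc Real.exp 2 * Real.exp 0.0545 ≤ (2.7182818286 ^ (2:ℕ)) * (1 - 0.0545 : ℝ)⁻¹ := by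
        apply mul_le_mul he2 he3 (Real.exp_pos _).le (by positivity)
    _ ≤ 0.8268 / 0.10545 := by norm_num

/-- Convexity: `exp(-0.10545 u) ≤ 1 - 0.1 u` for `u ∈ [0,1]`. -/
lemma exp_lin_u {u : ℝ} (h0 : 0 ≤ u) (h1 : u ≤ 1) :
    Real.exp (-0.10545 * u) ≤ 1 - 0.1 * u := by
  have hk : Real.exp (-0.10545 : ℝ) ≤ 0.9 := by
    rw [Real.exp_neg]
    have h10 : (10:ℝ)/9 ≤ Real.exp 0.10545 := exp_kappa_ge
    have h11 := inv_anti₀ (by norm_num : (0:ℝ) < 10/9) h10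
    have h12 : ((10:ℝ)/9)⁻¹ = 0.9 := by norm_num
    linarith
  have hcvx := convexOn_exp.2 (Set.mem_univ (-0.10545 : ℝ)) (Set.mem_univ (0 : ℝ))
    h0 (by linarith : (0:ℝ) ≤ 1 - u) (by ring)
  simp only [smul_eq_mul, mul_zero, add_zero, Real.exp_zero, mul_one] at hcvx
  have harg : Real.exp (-0.10545 * u) = Real.exp (u * -0.10545) := by rw [mul_comm]
  rw [harg]
  nlinarith [hcvx, hk]

/-- Convexity: `exp(0.9268 t) ≤ 1 + t` for `t ∈ [0, 0.106]`. -/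
lemma exp_lin_t {t : ℝ} (h0 : 0 ≤ t) (h1 : t ≤ 0.106) :
    Real.exp (0.9268 * t) ≤ 1 + t := by
  set r := t / 0.106 with hr
  have hr0 : 0 ≤ r := by positivity
  have hr1 : r ≤ 1 := by rw [hr, div_le_one (by norm_num)]; linarith
  have hcvx := convexOn_exp.2 (Set.mem_univ (0.9268 * 0.106 : ℝ)) (Set.mem_univ (0 : ℝ))
    hr0 (by linarith : (0:ℝ) ≤ 1 - r) (by ring)
  simp only [smul_eq_mul, mul_zero, add_zero, Real.exp_zero, mul_one] at hcvx
  have harg : r * (0.9268 * 0.106) = 0.9268 * t := by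
    rw [hr]; field_simp
  rw [harg] at hcvx
  have hb := exp_thw_le
  have ht : t = r * 0.106 := by rw [hr]; field_simp
  calc Real.exp (0.9268 * t) ≤ r * Real.exp (0.9268 * 0.106) + (1 - r) := hcvx
    _ ≤ r * 1.106 + (1 - r) := by nlinarith
    _ = 1 + r * 0.106 := by ring
    _ = 1 + t := by rw [← ht]

/-- Core of case B2. -/
lemma B2core (m : ℕ) (hm : 1 ≤ m) {u pr : ℝ} (hu : 0 < u)
    (hpu : 0.8268 * u ^ m ≤ 0.10545 * pr) :
    (0.1 * ((m:ℝ) + 1) + 0.10545) * u ≤ 0.1 * m * pr ^ ((1:ℝ) / m) := by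
  have hM : (0:ℝ) < m := by exact_mod_cast hm
  have hpr0 : 0 ≤ pr := by nlinarith [pow_pos hu m]
  have hKp : (0.8268 / 0.10545) * u ^ m ≤ pr := by
    rw [div_mul_eq_mul_div, div_le_iff₀ (by norm_num : (0:ℝ) < 0.10545)]
    linarith
  have h1 : ((0.8268 / 0.10545) * u ^ m) ^ ((1:ℝ)/m) ≤ pr ^ ((1:ℝ)/m) :=
    Real.rpow_le_rpow (by positivity) hKp (by positivity)
  have h2 : ((0.8268 / 0.10545) * u ^ m) ^ ((1:ℝ)/m)
      = (0.8268 / 0.10545 : ℝ) ^ ((1:ℝ)/m) * u := by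
    rw [Real.mul_rpow (by norm_num) (by positivity), one_div,
      Real.pow_rpow_inv_natCast hu.le (by omega)]
  have h3 : Real.exp (2.0545 / m) ≤ (0.8268 / 0.10545 : ℝ) ^ ((1:ℝ)/m) := by
    have hexp : (Real.exp 2.0545) ^ ((1:ℝ)/m) ≤ (0.8268 / 0.10545 : ℝ) ^ ((1:ℝ)/m) :=
      Real.rpow_le_rpow (Real.exp_pos _).le exp_L_le (by positivity)
    have hid : (Real.exp 2.0545) ^ ((1:ℝ)/m) = Real.exp (2.0545 / m) := by
      rw [← Real.exp_mul]; ring_nf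
    rw [← hid]; exact hexp
  have h4 : 1 + 2.0545 / (m:ℝ) ≤ Real.exp (2.0545 / m) := by
    have := Real.add_one_le_exp (2.0545 / (m:ℝ)); linarith
  have h5 : (1 + 2.0545 / (m:ℝ)) * u ≤ pr ^ ((1:ℝ)/m) * 1 := by
    calc (1 + 2.0545 / (m:ℝ)) * u ≤ (0.8268 / 0.10545 : ℝ) ^ ((1:ℝ)/m) * u := by
          apply mul_le_mul_of_nonneg_right _ hu.le
          linarith [le_trans h4 h3]
      _ ≤ pr ^ ((1:ℝ)/m) := by rw [← h2]; exact h1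
      _ = pr ^ ((1:ℝ)/m) * 1 := by ring
  have h6 := mul_le_mul_of_nonneg_left h5 (by positivity : (0:ℝ) ≤ 0.1 * m)
  calc (0.1 * ((m:ℝ) + 1) + 0.10545) * u = (0.1 * m) * ((1 + 2.0545 / (m:ℝ)) * u)
        + (0.20545 - (0.1 + 0.10545)) * u := by field_simp; ring
    _ ≤ (0.1 * m) * ((1 + 2.0545 / (m:ℝ)) * u) := by norm_num
    _ ≤ (0.1 * m) * (pr ^ ((1:ℝ)/m) * 1) := h6
    _ = 0.1 * m * pr ^ ((1:ℝ)/m) := by ring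

end Stmt10Aux

set_option maxHeartbeats 2000000 in
theorem stmt_10 (p q lam : ℝ) (hp : p ∈ Set.Icc (0 : ℝ) 1) (hq : q ∈ Set.Icc (0 : ℝ) 1)
    (hlam : lam ∈ Set.Icc (0 : ℝ) 1) (h : ℕ) (hh : 1 ≤ h) :
    (1 - lam) * (lam * g (h - 1) p + (1 - lam) * g h q) ≤
      g h (lam * p + (1 - lam) * q) := by
  obtain ⟨hp0, hp1⟩ := hp
  obtain ⟨hq0, hq1⟩ := hq
  obtain ⟨hl0, hl1⟩ := hlam
  obtain ⟨m, rfl⟩ : ∃ m, h = m + 1 := ⟨h - 1, by omega⟩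
  open Stmt10Aux in
  simp only [Nat.add_sub_cancel, Stmt10Aux.g_eq]
  -- trivial endpoint cases in lam
  rcases eq_or_lt_of_le hl0 with heq | hl0'
  · rw [← heq]; norm_num
  rcases eq_or_lt_of_le hl1 with heq1 | hl1'
  · rw [heq1]; norm_num
    exact mul_nonneg hp0 (Stmt10Aux.ee_pos _ _).le
  set b := 1 - lam with hbdef
  have hb0' : 0 < b := by rw [hbdef]; linarith
  have hb1 : b ≤ 1 := by rw [hbdef]; linarith
  set x := lam * p + b * q with hxdef
  have hx0 : 0 ≤ x := by rw [hxdef]; nlinarith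
  have hx1 : x ≤ 1 := by rw [hxdef]; nlinarith
  -- case p = 0
  rcases eq_or_lt_of_le hp0 with hp00 | hp0'
  · have hxq : x = b * q := by rw [hxdef, ← hp00]; ring
    have he : Stmt10Aux.ee (m+1) q ≤ Stmt10Aux.ee (m+1) (b * q) :=
      Stmt10Aux.ee_antitone _ (by positivity) (by nlinarith)
    rw [hxq, ← hp00]
    simp only [mul_zero, zero_mul, add_zero, zero_add]
    have h1 : b * (b * (q * Stmt10Aux.ee (m+1) q)) ≤ b * q * Stmt10Aux.ee (m+1) q := by
      nlinarith [mul_nonneg (mul_nonneg hb0'.le (by linarith : (0:ℝ) ≤ 1 - b))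
        (mul_nonneg hq0 (Stmt10Aux.ee_pos (m+1) q).le)]
    calc b * (b * (q * Stmt10Aux.ee (m+1) q)) ≤ b * q * Stmt10Aux.ee (m+1) q := h1
      _ ≤ b * q * Stmt10Aux.ee (m+1) (b * q) := by
          apply mul_le_mul_of_nonneg_left he (by positivity)
  -- now p > 0 ; main case split
  rcases le_or_gt (0.106 * p) q with hCH | hB
  -- ==================== CHORD case ====================
  · have hchord : lam * (p * Stmt10Aux.ee (m+1) p) + b * (q * Stmt10Aux.ee (m+1) q)
        ≤ x * Stmt10Aux.ee (m+1) x := by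
      rcases le_total q p with hqp | hpq
      · have := Stmt10Aux.chord (m+1) (by omega) hq0 hqp hp1 hl0'.le hl1'.le
        rw [hxdef, hbdef]
        convert this using 2
      · have hc := Stmt10Aux.chord (m+1) (by omega) hp0 hpq hq1
          (by linarith : (0:ℝ) ≤ b) hb1
        have harg : b * q + (1 - b) * p = x := by rw [hxdef, hbdef]; ring
        rw [harg] at hc
        have hco : (1 - b) = lam := by rw [hbdef]; ring
        rw [hco] at hc
        linarith
    -- reduce to comparing with the chord value
    have hkey1 : Real.exp (-(1:ℝ)/10) * Stmt10Aux.ee m p ≤ Stmt10Aux.ee (m+1) p := by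
      have htan := Stmt10Aux.tan_bound m hp0' hp1 hp0
      rw [div_self hp0'.ne'] at htan
      have hcast : ((m + 1 : ℕ) : ℝ) = (m : ℝ) + 1 := by push_cast; ring
      show Real.exp (-(1:ℝ)/10) * Real.exp (-0.1 * (m:ℝ) * p ^ ((1:ℝ)/(m:ℝ)))
          ≤ Real.exp (-0.1 * ((m+1:ℕ):ℝ) * p ^ ((1:ℝ)/((m+1:ℕ):ℝ)))
      rw [← Real.exp_add, hcast]
      apply Real.exp_le_exp.2
      nlinarith [htan]
    have hkey2 : 0.106 * p * (Real.exp (-(1:ℝ)/10) * Stmt10Aux.ee m p)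
        ≤ q * Stmt10Aux.ee (m+1) q := by
      have hmono := Stmt10Aux.g_mono (m+1) (by positivity : (0:ℝ) ≤ 0.106 * p)
        hCH hq1
      rw [Stmt10Aux.g_eq, Stmt10Aux.g_eq] at hmono
      have hanti : Stmt10Aux.ee (m+1) p ≤ Stmt10Aux.ee (m+1) (0.106 * p) :=
        Stmt10Aux.ee_antitone _ (by positivity) (by nlinarith)
      calc 0.106 * p * (Real.exp (-(1:ℝ)/10) * Stmt10Aux.ee m p)
          ≤ 0.106 * p * Stmt10Aux.ee (m+1) p := by
            apply mul_le_mul_of_nonneg_left hkey1 (by positivity)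
        _ ≤ 0.106 * p * Stmt10Aux.ee (m+1) (0.106 * p) := by
            apply mul_le_mul_of_nonneg_left hanti (by positivity)
        _ ≤ q * Stmt10Aux.ee (m+1) q := hmono
    -- scalar inequality  exp(-1/10) * (1 + 0.106 b) ≥ b
    have hsc : b ≤ Real.exp (-(1:ℝ)/10) * (1 + 0.106 * b) := by
      have hE : Real.exp ((1:ℝ)/10) ≤ 1.106 := by
        have := Stmt10Aux.exp_point_one_le
        norm_num at this ⊢
        linarith
      have hinv : Real.exp (-(1:ℝ)/10) = (Real.exp ((1:ℝ)/10))⁻¹ := by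
        rw [← Real.exp_neg]; norm_num
      have hlb : (1.106 : ℝ)⁻¹ ≤ Real.exp (-(1:ℝ)/10) := by
        rw [hinv]
        exact inv_anti₀ (Real.exp_pos _) hE
      have h2 : b ≤ 1.106⁻¹ * (1 + 0.106 * b) := by
        rw [inv_mul_eq_div, le_div_iff₀ (by norm_num : (0:ℝ) < 1.106)]
        nlinarith
      calc b ≤ 1.106⁻¹ * (1 + 0.106 * b) := h2
        _ ≤ Real.exp (-(1:ℝ)/10) * (1 + 0.106 * b) :=
            mul_le_mul_of_nonneg_right hlb (by linarith)
    -- combine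
    have hfin : b * (lam * (p * Stmt10Aux.ee m p) + b * (q * Stmt10Aux.ee (m+1) q))
        ≤ lam * (p * Stmt10Aux.ee (m+1) p) + b * (q * Stmt10Aux.ee (m+1) q) := by
      have hP0 : 0 ≤ p * Stmt10Aux.ee m p := mul_nonneg hp0 (Stmt10Aux.ee_pos m p).le
      have hQ0 : 0 ≤ q * Stmt10Aux.ee (m+1) q := mul_nonneg hq0 (Stmt10Aux.ee_pos (m+1) q).le
      -- b * P0 ≤ ee(m+1,p)*p + b * (q ee q) / suffices scaled by lam
      have hmain : b * (p * Stmt10Aux.ee m p)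
          ≤ p * Stmt10Aux.ee (m+1) p + b * (q * Stmt10Aux.ee (m+1) q) := by
        have c1 : p * (Real.exp (-(1:ℝ)/10) * Stmt10Aux.ee m p) ≤ p * Stmt10Aux.ee (m+1) p :=
          mul_le_mul_of_nonneg_left hkey1 hp0
        have c2 : b * (0.106 * p * (Real.exp (-(1:ℝ)/10) * Stmt10Aux.ee m p))
            ≤ b * (q * Stmt10Aux.ee (m+1) q) :=
          mul_le_mul_of_nonneg_left hkey2 hb0'.le
        have c3 : b * (p * Stmt10Aux.ee m p)
            ≤ (Real.exp (-(1:ℝ)/10) * (1 + 0.106 * b)) * (p * Stmt10Aux.ee m p) :=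
          mul_le_mul_of_nonneg_right hsc hP0
        nlinarith [c1, c2, c3]
      nlinarith [mul_le_mul_of_nonneg_left hmain hl0'.le,
        mul_nonneg (mul_nonneg hb0'.le hb0'.le) hQ0,
        mul_nonneg hb0'.le hQ0]
    exact le_trans hfin hchord
  -- ==================== TANGENT case (q < 0.106 p) ====================
  · have hqp : q < p := by nlinarith
    have hqx : q < x := by rw [hxdef]; nlinarith
    have hx0' : 0 < x := by rw [hxdef]; nlinarith
    have hcast : ((m + 1 : ℕ) : ℝ) = (m : ℝ) + 1 := by push_cast; ring
    set U := x ^ ((1:ℝ)/((m:ℝ)+1)) with hUdef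
    have hU0 : 0 < U := Real.rpow_pos_of_pos hx0' _
    have hU1 : U ≤ 1 := Real.rpow_le_one hx0 hx1 (by positivity)
    have htang := Stmt10Aux.tangent_line (m+1) (by omega) hq0 hqx.le hx1
    rw [hcast, ← hUdef] at htang
    set D := (1 - 0.1 * U) * Stmt10Aux.ee (m+1) x with hDdef
    have hxq : x - q = lam * (p - q) := by rw [hxdef, hbdef]; ring
    rw [hxq] at htang
    -- q·D ≤ q·ee q
    have hqD : q * D ≤ q * Stmt10Aux.ee (m+1) q := by
      have hDle : D ≤ Stmt10Aux.ee (m+1) q := by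
        have h1 : D ≤ Stmt10Aux.ee (m+1) x := by
          rw [hDdef]
          nlinarith [Stmt10Aux.ee_pos (m+1) x, hU0]
        exact le_trans h1 (Stmt10Aux.ee_antitone _ hq0 hqx.le)
      exact mul_le_mul_of_nonneg_left hDle hq0
    -- auxiliary ratio T = b q / p
    set T := b * q / p with hTdef
    have ht0 : 0 ≤ T := by rw [hTdef]; positivity
    have hT106 : T ≤ 0.106 := by
      rw [hTdef, div_le_iff₀ hp0']; nlinarith
    have hpT : p * T = b * q := by rw [hTdef]; field_simp
    -- ========== the V6 exponent inequality ==========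
    have hV6 : 0.1 * ((m:ℝ)+1) * U + 0.10545 * U
        ≤ 0.1 * (m:ℝ) * p ^ ((1:ℝ)/(m:ℝ)) + lam + 0.9268 * T := by
      by_cases hdi : 0.10545 * U ≤ 0.9 * lam + 0.8268 * T
      · -- B1 subcase : tangent AM-GM at p
        have htan := Stmt10Aux.tan_bound m hp0' hp1 hx0
        rw [← hUdef] at htan
        have hxp : x / p = lam + T := by
          rw [hxdef, hTdef]
          field_simp
        rw [hxp] at htan
        linarith [htan, hdi]
      · -- B2 subcase
        push_neg at hdi
        have hm1 : 1 ≤ m := by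
          by_contra hc
          have hm0 : m = 0 := by omega
          subst hm0
          have hU : U = x := by
            rw [hUdef]; norm_num
          have hxle : x ≤ lam + T := by
            have h1 : lam * p ≤ lam := mul_le_of_le_one_right hl0 hp1
            have h2 : p * T ≤ T := mul_le_of_le_one_left ht0 hp1
            rw [hxdef, ← hpT]
            exact add_le_add h1 h2
          rw [hU] at hdi
          nlinarith [hdi, hxle, hl0'.le, ht0, hx0]
        have hcu : 0.8268 * (lam + T) < 0.10545 * U := by nlinarith
        have hxc : x = (lam + T) * p := by rw [hxdef, ← hpT]; ring
        have hexpU : (1:ℝ)/((m:ℝ)+1) = (((m+1:ℕ):ℝ))⁻¹ := by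
          rw [hcast, one_div]
        have hUx : U ^ (m+1) = x := by
          rw [hUdef, hexpU, Real.rpow_inv_natCast_pow hx0 (by omega : m + 1 ≠ 0)]
        have hpu : 0.8268 * U ^ m ≤ 0.10545 * p := by
          have h6 : U ^ m * U = U ^ (m+1) := by rw [pow_succ]
          have h7 : 0.8268 * (U ^ m * U) ≤ (0.10545 * p) * U := by
            rw [h6, hUx, hxc]
            have := mul_le_mul_of_nonneg_right hcu.le hp0
            nlinarith [this]
          have h8 : (0.8268 * U ^ m) * U ≤ (0.10545 * p) * U := by linarith [h7]
          exact le_of_mul_le_mul_right h8 hU0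
        have hB2 := Stmt10Aux.B2core m hm1 hU0 hpu
        nlinarith [hB2, hl0'.le, ht0]
    -- ========== from V6 to V3 via exponentials ==========
    set Pm := 0.1 * (m:ℝ) * p ^ ((1:ℝ)/(m:ℝ)) with hPmdef
    have heem : Stmt10Aux.ee m p = Real.exp (-Pm) := by
      unfold Stmt10Aux.ee
      rw [hPmdef]
      congr 1
      ring
    have heeh : Stmt10Aux.ee (m+1) x = Real.exp (-(0.1 * ((m:ℝ)+1) * U)) := by
      unfold Stmt10Aux.ee
      rw [hcast, ← hUdef]
      congr 1
      ring
    have e1 : b ≤ Real.exp (-lam) := by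
      have := Real.add_one_le_exp (-lam)
      rw [hbdef]; linarith
    have e2 : Real.exp (-0.10545 * U) ≤ 1 - 0.1 * U := Stmt10Aux.exp_lin_u hU0.le hU1
    have e3 : Real.exp (0.9268 * T) ≤ 1 + T := Stmt10Aux.exp_lin_t ht0 hT106
    have hV3 : b * (p * Stmt10Aux.ee m p) ≤ (p + b * q) * D := by
      rw [hDdef, heem, heeh]
      have step1 : b * (p * Real.exp (-Pm)) ≤ Real.exp (-lam) * (p * Real.exp (-Pm)) :=
        mul_le_mul_of_nonneg_right e1 (mul_nonneg hp0 (Real.exp_pos _).le)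
      have step2 : Real.exp (-lam) * (p * Real.exp (-Pm))
          ≤ p * Real.exp (0.9268 * T - 0.10545 * U - 0.1 * ((m:ℝ)+1) * U) := by
        have hmerge : Real.exp (-lam) * (p * Real.exp (-Pm)) = p * Real.exp (-lam - Pm) := by
          rw [show (-lam - Pm : ℝ) = (-lam) + (-Pm) by ring, Real.exp_add]
          ring
        rw [hmerge]
        apply mul_le_mul_of_nonneg_left _ hp0
        apply Real.exp_le_exp.2
        linarith [hV6]
      have step3 : p * Real.exp (0.9268 * T - 0.10545 * U - 0.1 * ((m:ℝ)+1) * U)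
          ≤ (p + b * q) * ((1 - 0.1 * U) * Real.exp (-(0.1 * ((m:ℝ)+1) * U))) := by
        have hsplit : Real.exp (0.9268 * T - 0.10545 * U - 0.1 * ((m:ℝ)+1) * U)
            = Real.exp (0.9268 * T) * Real.exp (-0.10545 * U)
              * Real.exp (-(0.1 * ((m:ℝ)+1) * U)) := by
          rw [← Real.exp_add, ← Real.exp_add]
          congr 1
          ring
        rw [hsplit]
        have hA : p * Real.exp (0.9268 * T) ≤ p + b * q := by
          calc p * Real.exp (0.9268 * T) ≤ p * (1 + T) :=
                mul_le_mul_of_nonneg_left e3 hp0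
            _ = p + p * T := by ring
            _ = p + b * q := by rw [hpT]
        calc p * (Real.exp (0.9268 * T) * Real.exp (-0.10545 * U)
              * Real.exp (-(0.1 * ((m:ℝ)+1) * U)))
            = (p * Real.exp (0.9268 * T)) * Real.exp (-0.10545 * U)
              * Real.exp (-(0.1 * ((m:ℝ)+1) * U)) := by ring
          _ ≤ ((p + b * q) * (1 - 0.1 * U)) * Real.exp (-(0.1 * ((m:ℝ)+1) * U)) := by
              apply mul_le_mul_of_nonneg_right _ (Real.exp_pos _).le
              apply mul_le_mul hA e2 (Real.exp_pos _).le (by nlinarith [hpT])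
          _ = (p + b * q) * ((1 - 0.1 * U) * Real.exp (-(0.1 * ((m:ℝ)+1) * U))) := by ring
      exact le_trans step1 (le_trans step2 step3)
    -- ========== final combination ==========
    have c1 : lam * (b * (p * Stmt10Aux.ee m p)) ≤ lam * ((p + b * q) * D) :=
      mul_le_mul_of_nonneg_left hV3 hl0'.le
    have c2 : (lam * (1 + b)) * (q * D) ≤ (lam * (1 + b)) * (q * Stmt10Aux.ee (m+1) q) :=
      mul_le_mul_of_nonneg_left hqD (by nlinarith)
    have hQid : b * (b * (q * Stmt10Aux.ee (m+1) q))
        = (1 - lam - lam * b) * (q * Stmt10Aux.ee (m+1) q) := by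
      rw [hbdef]; ring
    linarith [c1, c2, htang, hQid]
end
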